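/- Fix r ≥ 1 and bit sequences l, m, n: ℤ → {0,1} with m/l and n/l horizontal r-ribbon strips. Let a≪ ∈ ℕʳ satisfy (a≪)_h = 0 for all h with h≪ ≤ h < r, where h≪ = liminf_{i→−∞} Σ_{j=0}^{r−1} l_{i−j}. Then there exist a unique bit sequence k and a unique a≫ ∈ ℕʳ such that (l, m, n, k, a≪, a≫) is a basic square configuration; moreover (a≫)_h = 0 for all h with h≫ ≤ h < r, where h≫ = liminf_{i→+∞} Σ_{j=0}^{r−1} l_{i−j}. -/

import Mathlib

open scoped Classical

/-- A doubly infinite bit sequence: a function `ℤ → ℕ` with all values `≤ 1`. -/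
def IsBitSeq (s : ℤ → ℕ) : Prop := ∀ i, s i ≤ 1

/-- The quadruple `(w (i-r), t (i-r), s i, w i)` equals `(1,0,0,1)`:
the strip `t/s` with witness `w` has an `r`-ribbon at position `i`. -/
def Quad (r : ℕ) (s t w : ℤ → ℕ) (i : ℤ) : Prop :=
  w (i - r) = 1 ∧ t (i - r) = 0 ∧ s i = 0 ∧ w i = 1

/-- `w` is a witness for `t/s` being a horizontal `r`-ribbon strip: for every `i`, the
quadruple `(w (i-r), t (i-r), s i, w i)` is of the form `(a,a,b,b)` or equals `(1,0,0,1)`,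
the latter happening only finitely often. -/
def IsWitness (r : ℕ) (s t w : ℤ → ℕ) : Prop :=
  (∀ i : ℤ, (w (i - r) = t (i - r) ∧ s i = w i) ∨ Quad r s t w i) ∧
    {i : ℤ | Quad r s t w i}.Finite

/-- `t/s` is a horizontal `r`-ribbon strip (`s ≤ʰᵣ t`). -/
def HStrip (r : ℕ) (s t : ℤ → ℕ) : Prop := ∃ w, IsWitness r s t w

/-- The height `∑_{j=1}^{r-1} w (i - j)` of a ribbon at position `i` read off from `w`. -/
def hgtAt (r : ℕ) (w : ℤ → ℕ) (i : ℤ) : ℕ := ∑ j ∈ Finset.Ico 1 r, w (i - (j : ℤ))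

/-- The witness of a horizontal `r`-ribbon strip (it is unique). -/
noncomputable def theWitness (r : ℕ) (s t : ℤ → ℕ) : ℤ → ℕ :=
  if h : HStrip r s t then h.choose else s

/-- The strip `t/s` has a ribbon at position (head diagonal) `i`. -/
def RibbonAt (r : ℕ) (s t : ℤ → ℕ) (i : ℤ) : Prop :=
  Quad r s t (theWitness r s t) i

/-- The number of `r`-ribbons of the strip `t/s`. -/
noncomputable def ribCount (r : ℕ) (s t : ℤ → ℕ) : ℕ :=
  {i : ℤ | RibbonAt r s t i}.ncard

/-- Twice the spin of the horizontal `r`-ribbon strip `t/s`: the total height of the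
ribbons of its standardisation. -/
noncomputable def twoSpin (r : ℕ) (s t : ℤ → ℕ) : ℕ :=
  ∑ᶠ i ∈ {i : ℤ | RibbonAt r s t i}, hgtAt r (theWitness r s t) i

/-- A vector in `ℕ^r`, encoded as a function `ℕ → ℕ` supported on `{0, …, r-1}`. -/
def Supported (r : ℕ) (a : ℕ → ℕ) : Prop := ∀ h : ℕ, r ≤ h → a h = 0

/-- Basic square configuration `((l m // n k), aL, aG)` (Definition of the paper):
all five skew shapes are horizontal `r`-ribbon strips, and with `w` the witness for
`l ≤ʰᵣ k` there is a map `a : ℤ → ℕ → ℕ` satisfying conditions (0)–(4). -/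
def IsBSC (r : ℕ) (l m n k : ℤ → ℕ) (aL aG : ℕ → ℕ) : Prop :=
  HStrip r l m ∧ HStrip r l n ∧ HStrip r m k ∧ HStrip r n k ∧ HStrip r l k ∧
  ∀ w, IsWitness r l k w →
    ∃ a : ℤ → ℕ → ℕ, ∀ i : ℤ,
      (¬ Quad r l k w i → a i = a (i + 1)) ∧
      (w (i - r) ≠ w i → a i (hgtAt r w i) = 0) ∧
      (Quad r l k w i → RibbonAt r l m i → RibbonAt r l n i →
        a (i + 1) = fun h => a i h + (if h = hgtAt r w i then 1 else 0)) ∧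
      (Quad r l k w i → RibbonAt r m k i → RibbonAt r n k i →
        a i = fun h => a (i + 1) h + (if h = hgtAt r w i then 1 else 0)) ∧
      (Quad r l k w i → ¬ (RibbonAt r l m i ∧ RibbonAt r l n i) →
        ¬ (RibbonAt r m k i ∧ RibbonAt r n k i) → a i = a (i + 1)) ∧
      ((∀ j : ℤ, j < i → ¬ Quad r l k w j) → a i = aL) ∧
      ((∀ j : ℤ, i ≤ j → ¬ Quad r l k w j) → a i = aG)

namespace Stmt13

/-- characteristic function -/
noncomputable def chi (Q : Set ℤ) (i : ℤ) : ℤ := if i ∈ Q then 1 else 0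

noncomputable def mkW (Q : Set ℤ) (s : ℤ → ℕ) (i : ℤ) : ℕ := if i ∈ Q then 1 else s i

noncomputable def mkT (r : ℕ) (Q : Set ℤ) (s : ℤ → ℕ) (i : ℤ) : ℕ :=
  if i + r ∈ Q then 0 else mkW Q s i

/-- `Q` is a valid quad set over `s`. -/
def ValidQ (r : ℕ) (s : ℤ → ℕ) (Q : Set ℤ) : Prop :=
  Q.Finite ∧ ∀ i ∈ Q, s i = 0 ∧ (i - r ∈ Q ∨ s (i - r) = 1)

variable {r : ℕ} {s t w : ℤ → ℕ} {Q : Set ℤ}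

lemma mkW_bit (hs : IsBitSeq s) : IsBitSeq (mkW Q s) := by
  intro i; unfold mkW; split <;> simp [hs i]

lemma mkT_bit (hs : IsBitSeq s) : IsBitSeq (mkT r Q s) := by
  intro i; unfold mkT; split
  · simp
  · exact mkW_bit hs i

lemma quad_mk_iff (hQ : ValidQ r s Q) (i : ℤ) :
    Quad r s (mkT r Q s) (mkW Q s) i ↔ i ∈ Q := by
  constructor
  · rintro ⟨-, -, hsi, hwi⟩
    unfold mkW at hwi
    by_contra hiQ
    rw [if_neg hiQ] at hwi
    omega
  · intro hiQ
    obtain ⟨hsi, hprev⟩ := hQ.2 i hiQ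
    refine ⟨?_, ?_, hsi, ?_⟩
    · unfold mkW; rcases hprev with h | h
      · rw [if_pos h]
      · split <;> simp [h]
    · unfold mkT
      rw [if_pos (by simpa using hiQ)]
    · unfold mkW; rw [if_pos hiQ]

lemma isWitness_mk (hQ : ValidQ r s Q) : IsWitness r s (mkT r Q s) (mkW Q s) := by
  constructor
  · intro i
    by_cases hiQ : i ∈ Q
    · exact Or.inr ((quad_mk_iff hQ i).2 hiQ)
    · left
      constructor
      · unfold mkT
        rw [if_neg (by simpa using hiQ)]
      · unfold mkW; rw [if_neg hiQ]
  · exact hQ.1.subset (fun i hi => (quad_mk_iff hQ i).1 hi)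

lemma hstrip_mk (hQ : ValidQ r s Q) : HStrip r s (mkT r Q s) :=
  ⟨_, isWitness_mk hQ⟩

/-- Every witness comes from a valid quad set. -/
lemma witness_toQ (hw : IsWitness r s t w) :
    ∃ Q : Set ℤ, ValidQ r s Q ∧ w = mkW Q s ∧ t = mkT r Q s ∧
      ∀ i, (Quad r s t w i ↔ i ∈ Q) := by
  refine ⟨{i | Quad r s t w i}, ⟨hw.2, ?_⟩, ?_, ?_, fun i => Iff.rfl⟩
  · rintro i ⟨h1, h2, h3, h4⟩
    refine ⟨h3, ?_⟩
    rcases hw.1 (i - r) with ⟨hh1, hh2⟩ | hq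
    · right; omega
    · left; exact hq
  · funext i
    unfold mkW
    split
    · rename_i hq; exact hq.2.2.2
    · rename_i hq
      rcases hw.1 i with ⟨-, h⟩ | h
      · omega
      · exact absurd h hq
  · funext i
    unfold mkT mkW
    have : (i + (r:ℤ)) - (r:ℕ) = i := by push_cast; ring
    split
    · rename_i hq
      obtain ⟨-, hq2, -, -⟩ := hq
      rw [this] at hq2
      exact hq2
    · rename_i hq
      rcases hw.1 (i + r) with ⟨h1, -⟩ | h
      · rw [this] at h1
        rw [← h1]
        split
        · rename_i hq2; exact hq2.2.2.2
        · rename_i hq2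
          rcases hw.1 i with ⟨-, h2⟩ | h2
          · omega
          · exact absurd h2 hq2
      · exact absurd h hq

/-- ℤ-valued identity. -/
lemma mkT_cast (hQ : ValidQ r s Q) (i : ℤ) :
    (mkT r Q s i : ℤ) = (s i : ℤ) + chi Q i - chi Q (i + r) := by
  unfold mkT mkW chi
  by_cases h2 : i + r ∈ Q
  · rw [if_pos h2, if_pos h2]
    obtain ⟨-, hprev⟩ := hQ.2 _ h2
    have : (i + (r:ℤ)) - (r:ℕ) = i := by push_cast; ring
    rw [this] at hprev
    by_cases h1 : i ∈ Q
    · rw [if_pos h1]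
      obtain ⟨hsi, -⟩ := hQ.2 _ h1
      simp [hsi]
    · rw [if_neg h1]
      rcases hprev with h | h
      · exact absurd h h1
      · simp [h]
  · rw [if_neg h2, if_neg h2]
    by_cases h1 : i ∈ Q
    · rw [if_pos h1, if_pos h1]
      obtain ⟨hsi, -⟩ := hQ.2 _ h1
      simp [hsi]
    · rw [if_neg h1, if_neg h1]; ring

/-- A finitely supported `r`-periodic function vanishes. -/
lemma periodic_zero (hr : 1 ≤ r) (g : ℤ → ℤ) (hper : ∀ i, g i = g (i + r))
    (hfin : {i | g i ≠ 0}.Finite) : ∀ i, g i = 0 := by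
  intro i
  have key : ∀ n : ℕ, g i = g (i + n * r) := by
    intro n
    induction n with
    | zero => simp
    | succ n ih =>
      rw [ih, hper (i + n * r)]
      congr 1
      push_cast
      ring
  by_cases hbd : {i | g i ≠ 0}.Nonempty
  · obtain ⟨B, hB⟩ := hfin.bddAbove
    have hrpos : (0:ℤ) < r := by exact_mod_cast hr
    obtain ⟨n, hn⟩ : ∃ n : ℕ, B < i + n * r := by
      refine ⟨(B - i).toNat + 1, ?_⟩
      have h1 : (B - i) < (((B - i).toNat + 1 : ℕ) : ℤ) := by
        push_cast
        omega
      have h2 : (((B - i).toNat + 1 : ℕ) : ℤ) ≤ (((B - i).toNat + 1 : ℕ) : ℤ) * r := by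
        have : (0:ℤ) ≤ (((B - i).toNat + 1 : ℕ) : ℤ) := by positivity
        have hr' : (1:ℤ) ≤ (r:ℤ) := by exact_mod_cast hr
        nlinarith
      omega
    rw [key n]
    by_contra hne
    have := hB (show (i + (n:ℤ) * r) ∈ {i | g i ≠ 0} from hne)
    omega
  · by_contra hne
    exact hbd ⟨i, hne⟩

/-- Uniqueness of the quad set. -/
lemma validQ_unique (hr : 1 ≤ r) {Q1 Q2 : Set ℤ} (h1 : ValidQ r s Q1)
    (h2 : ValidQ r s Q2) (ht : mkT r Q1 s = mkT r Q2 s) : Q1 = Q2 := by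
  have hper : ∀ i, (chi Q1 i - chi Q2 i) = (chi Q1 (i+r) - chi Q2 (i+r)) := by
    intro i
    have e1 := mkT_cast h1 i
    have e2 := mkT_cast h2 i
    rw [ht] at e1
    omega
  have hfin : {i | (chi Q1 i - chi Q2 i) ≠ 0}.Finite := by
    apply (h1.1.union h2.1).subset
    intro i hi
    simp only [Set.mem_setOf_eq, chi] at hi
    by_contra h
    simp only [Set.mem_union] at h
    push_neg at h
    rw [if_neg h.1, if_neg h.2] at hi
    omega
  have hz := periodic_zero hr _ hper hfin
  ext i
  have := hz i
  unfold chi at this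
  constructor <;> intro h
  · rw [if_pos h] at this; by_contra h2; rw [if_neg h2] at this; omega
  · rw [if_pos h] at this; by_contra h1; rw [if_neg h1] at this; omega

/-- Witness uniqueness. -/
lemma witness_unique (hr : 1 ≤ r) {w1 w2 : ℤ → ℕ} (h1 : IsWitness r s t w1)
    (h2 : IsWitness r s t w2) : w1 = w2 := by
  obtain ⟨Q1, hQ1, hw1, ht1, -⟩ := witness_toQ h1
  obtain ⟨Q2, hQ2, hw2, ht2, -⟩ := witness_toQ h2
  have : Q1 = Q2 := validQ_unique hr hQ1 hQ2 (by rw [← ht1, ← ht2])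
  rw [hw1, hw2, this]

lemma theWitness_spec (h : HStrip r s t) : IsWitness r s t (theWitness r s t) := by
  unfold theWitness
  rw [dif_pos h]
  exact h.choose_spec

/-- `theWitness` of a strip presented by a valid quad set, and ribbons. -/
lemma theWitness_mk (hr : 1 ≤ r) (hQ : ValidQ r s Q) :
    theWitness r s (mkT r Q s) = mkW Q s :=
  witness_unique hr (theWitness_spec (hstrip_mk hQ)) (isWitness_mk hQ)

lemma ribbonAt_mk (hr : 1 ≤ r) (hQ : ValidQ r s Q) (i : ℤ) :
    RibbonAt r s (mkT r Q s) i ↔ i ∈ Q := by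
  unfold RibbonAt
  rw [theWitness_mk hr hQ]
  exact quad_mk_iff hQ i

/-- If `Qm ⊆ Q` are valid quad sets over `s`, then `Q \ Qm` is a valid quad set over
`m = mkT r Qm s` and produces the same top `mkT r Q s`. -/
lemma validQ_diff {Qm : Set ℤ} (hQ : ValidQ r s Q) (hQm : ValidQ r s Qm) (hsub : Qm ⊆ Q) :
    ValidQ r (mkT r Qm s) (Q \ Qm) ∧ mkT r (Q \ Qm) (mkT r Qm s) = mkT r Q s := by
  have hval : ValidQ r (mkT r Qm s) (Q \ Qm) := by
    refine ⟨hQ.1.diff, ?_⟩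
    rintro i ⟨hiQ, hiQm⟩
    obtain ⟨hsi, hprev⟩ := hQ.2 i hiQ
    constructor
    · simp only [mkT, mkW]
      by_cases h : i + (r:ℕ) ∈ Qm
      · rw [if_pos h]
      · rw [if_neg h, if_neg hiQm, hsi]
    · rcases hprev with h | h
      · by_cases hm : i - r ∈ Qm
        · right
          simp only [mkT, mkW]
          have hii : i - (r:ℤ) + r = i := by ring
          rw [hii, if_neg hiQm, if_pos hm]
        · exact Or.inl ⟨h, hm⟩
      · have hm : i - r ∉ Qm := by
          intro hc
          exact absurd (hQm.2 _ hc).1 (by omega)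
        right
        simp only [mkT, mkW]
        have hii : i - (r:ℤ) + r = i := by ring
        rw [hii, if_neg hiQm, if_neg hm, h]
  refine ⟨hval, ?_⟩
  funext i
  have e1 := mkT_cast hval i
  have e2 := mkT_cast hQm i
  have e3 := mkT_cast hQ i
  have hchi : ∀ j, chi (Q \ Qm) j + chi Qm j = chi Q j := by
    intro j
    unfold chi
    by_cases hm : j ∈ Qm
    · simp [Set.mem_diff, hm, hsub hm]
    · by_cases hq : j ∈ Q <;> simp [Set.mem_diff, hm, hq]
  have hc1 := hchi i
  have hc2 := hchi (i + r)
  omega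

/-- Decomposition: if `s ≤ m ≤ k'` and `s ≤ k'` with quad sets `Qm`, `Q''`, `Q'`, then
`Q' = Qm ⊔ Q''`. -/
lemma quad_decompose (hr : 1 ≤ r) {Qm Q' Q'' : Set ℤ}
    (hQm : ValidQ r s Qm) (hQ' : ValidQ r s Q')
    (hQ'' : ValidQ r (mkT r Qm s) Q'')
    (hk : mkT r Q'' (mkT r Qm s) = mkT r Q' s) :
    (∀ i, i ∈ Q' ↔ (i ∈ Qm ∨ i ∈ Q'')) ∧ ∀ i, ¬ (i ∈ Qm ∧ i ∈ Q'') := by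
  have hper : ∀ i, (chi Qm i + chi Q'' i - chi Q' i)
      = (chi Qm (i+r) + chi Q'' (i+r) - chi Q' (i+r)) := by
    intro i
    have e1 := mkT_cast hQ'' i
    have e2 := mkT_cast hQm i
    have e3 := mkT_cast hQ' i
    rw [hk] at e1
    omega
  have hfin : {i | (chi Qm i + chi Q'' i - chi Q' i) ≠ 0}.Finite := by
    apply ((hQm.1.union hQ''.1).union hQ'.1).subset
    intro i hi
    simp only [Set.mem_setOf_eq, chi] at hi
    by_contra h
    simp only [Set.mem_union] at h
    push_neg at h
    rw [if_neg h.1.1, if_neg h.1.2, if_neg h.2] at hi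
    omega
  have hz := periodic_zero hr _ hper hfin
  constructor
  · intro i
    have := hz i
    unfold chi at this
    constructor
    · intro h
      rw [if_pos h] at this
      by_contra hc
      push_neg at hc
      rw [if_neg hc.1, if_neg hc.2] at this
      omega
    · intro h
      by_contra hc
      rw [if_neg hc] at this
      rcases h with h | h
      · rw [if_pos h] at this; omega
      · rw [if_pos h] at this
        split at this <;> omega
  · intro i ⟨h1, h2⟩
    have := hz i
    unfold chi at this
    rw [if_pos h1, if_pos h2] at this
    split at this <;> omega

section Construction

variable (r : ℕ) (l : ℤ → ℕ) (Qm Qn : Set ℤ) (aL : ℕ → ℕ) (N : ℤ)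

/-- `ite` with a fixed classical instance -/
noncomputable def cIte {α : Sort*} (c : Prop) (a b : α) : α :=
  @ite _ c (Classical.propDecidable c) a b

lemma cIte_pos {α : Sort*} {c : Prop} (h : c) (a b : α) : cIte c a b = a := by
  unfold cIte; exact if_pos h

lemma cIte_neg {α : Sort*} {c : Prop} (h : ¬ c) (a b : α) : cIte c a b = b := by
  unfold cIte; exact if_neg h

/-- add one at coordinate `h0` -/
def bump (A : ℕ → ℕ) (h0 : ℕ) : ℕ → ℕ := fun h => A h + if h = h0 then 1 else 0

/-- remove one at coordinate `h0` -/
def drop (A : ℕ → ℕ) (h0 : ℕ) : ℕ → ℕ := fun h => A h - if h = h0 then 1 else 0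

/-- The scan: `(F t).1` is the witness-so-far (valid through position `N+t`), and
`(F t).2` is the vector `a (N+1+t)`. -/
noncomputable def F : ℕ → (ℤ → ℕ) × (ℕ → ℕ)
  | 0 => (l, aL)
  | (t+1) =>
      let P := F t
      let i : ℤ := N + 1 + t
      let u := P.1 (i - r)
      let h0 := ∑ j ∈ Finset.Ico 1 r, P.1 (i - (j:ℤ))
      let quad := i ∈ Qm ∨ i ∈ Qn ∨ (u = 1 ∧ l i = 0 ∧ 0 < P.2 h0)
      (Function.update P.1 i (cIte quad 1 (l i)),
       cIte (i ∈ Qm ∧ i ∈ Qn) (bump P.2 h0)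
         (cIte (quad ∧ i ∉ Qm ∧ i ∉ Qn) (drop P.2 h0) P.2))

/-- the witness being constructed -/
noncomputable def wk (i : ℤ) : ℕ :=
  if i ≤ N then l i else (F r l Qm Qn aL N (i - N).toNat).1 i

/-- the interpolating vectors -/
noncomputable def aZ (i : ℤ) : ℕ → ℕ :=
  if i ≤ N + 1 then aL else (F r l Qm Qn aL N (i - (N+1)).toNat).2

/-- the quad decision -/
noncomputable def quadDec (i : ℤ) : Prop :=
  i ∈ Qm ∨ i ∈ Qn ∨
    (wk r l Qm Qn aL N (i - r) = 1 ∧ l i = 0 ∧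
      0 < aZ r l Qm Qn aL N i (hgtAt r (wk r l Qm Qn aL N) i))

variable {r l Qm Qn aL N}

lemma F_fst_stable (t : ℕ) (j : ℤ) (hj : j ≤ N + t) :
    (F r l Qm Qn aL N (t+1)).1 j = (F r l Qm Qn aL N t).1 j := by
  have : j ≠ N + 1 + t := by omega
  simp only [F]
  exact Function.update_of_ne this _ _

lemma F_fst_agree {t t' : ℕ} (h : t ≤ t') (j : ℤ) (hj : j ≤ N + t) :
    (F r l Qm Qn aL N t').1 j = (F r l Qm Qn aL N t).1 j := by
  induction t', h using Nat.le_induction with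
  | base => rfl
  | succ t' ht' ih =>
    rw [F_fst_stable t' j (by push_cast; omega), ih]

lemma wk_eq_F (t : ℕ) (j : ℤ) (hj : j ≤ N + t) :
    (F r l Qm Qn aL N t).1 j = wk r l Qm Qn aL N j := by
  unfold wk
  by_cases hN : j ≤ N
  · rw [if_pos hN]
    have : ∀ u : ℕ, (F r l Qm Qn aL N u).1 j = l j := by
      intro u
      induction u with
      | zero => rfl
      | succ u ih => rw [F_fst_stable u j (by push_cast; omega), ih]
    rw [this]
  · rw [if_neg hN]
    have h1 : ((j - N).toNat : ℤ) = j - N := by omega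
    have h2 : (j - N).toNat ≤ t := by omega
    exact F_fst_agree h2 j (by omega)

lemma wk_le_N (j : ℤ) (hj : j ≤ N) : wk r l Qm Qn aL N j = l j := by
  unfold wk; rw [if_pos hj]

lemma aZ_le (i : ℤ) (hi : i ≤ N + 1) : aZ r l Qm Qn aL N i = aL := by
  unfold aZ; rw [if_pos hi]

lemma aZ_eq_F (t : ℕ) : aZ r l Qm Qn aL N (N + 1 + t) = (F r l Qm Qn aL N t).2 := by
  unfold aZ
  rcases Nat.eq_zero_or_pos t with h | h
  · subst h
    rw [if_pos (by simp)]
    rfl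
  · rw [if_neg (by push_cast; omega)]
    have h2 : (N + 1 + (t:ℤ) - (N+1)).toNat = t := by omega
    rw [h2]

/-- The fundamental unfolding of the construction at a position `i > N`. -/
lemma wk_rule (hr : 1 ≤ r) (i : ℤ) (hi : N < i) :
    wk r l Qm Qn aL N i = cIte (quadDec r l Qm Qn aL N i) 1 (l i) := by
  obtain ⟨t, rfl⟩ : ∃ t : ℕ, i = N + 1 + t := ⟨(i - N - 1).toNat, by omega⟩
  have hwi : wk r l Qm Qn aL N (N+1+t) = (F r l Qm Qn aL N (t+1)).1 (N+1+t) :=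
    (wk_eq_F (t+1) _ (by push_cast; omega)).symm
  rw [hwi]
  show (Function.update (F r l Qm Qn aL N t).1 (N+1+(t:ℤ)) _) (N+1+(t:ℤ)) = _
  rw [Function.update_self]
  have hu : (F r l Qm Qn aL N t).1 (N + 1 + t - r) = wk r l Qm Qn aL N (N+1+t-r) :=
    wk_eq_F t _ (by push_cast; omega)
  have hh : (∑ j ∈ Finset.Ico 1 r, (F r l Qm Qn aL N t).1 (N + 1 + t - (j:ℤ)))
      = hgtAt r (wk r l Qm Qn aL N) (N+1+t) := by
    unfold hgtAt
    apply Finset.sum_congr rfl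
    intro j hj
    simp only [Finset.mem_Ico] at hj
    exact wk_eq_F t _ (by push_cast; omega)
  unfold quadDec
  rw [hu, hh, aZ_eq_F t]

lemma aZ_rule (hr : 1 ≤ r) (i : ℤ) (hi : N < i) :
    aZ r l Qm Qn aL N (i + 1) =
      cIte (i ∈ Qm ∧ i ∈ Qn)
        (bump (aZ r l Qm Qn aL N i) (hgtAt r (wk r l Qm Qn aL N) i))
        (cIte (quadDec r l Qm Qn aL N i ∧ i ∉ Qm ∧ i ∉ Qn)
          (drop (aZ r l Qm Qn aL N i) (hgtAt r (wk r l Qm Qn aL N) i))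
          (aZ r l Qm Qn aL N i)) := by
  obtain ⟨t, rfl⟩ : ∃ t : ℕ, i = N + 1 + t := ⟨(i - N - 1).toNat, by omega⟩
  have h1 : (N + 1 + (t:ℤ)) + 1 = N + 1 + ((t+1 : ℕ) : ℤ) := by push_cast; ring
  rw [h1, aZ_eq_F (t+1), aZ_eq_F t]
  have hu : (F r l Qm Qn aL N t).1 (N + 1 + t - r) = wk r l Qm Qn aL N (N+1+t-r) :=
    wk_eq_F t _ (by push_cast; omega)
  have hh : (∑ j ∈ Finset.Ico 1 r, (F r l Qm Qn aL N t).1 (N + 1 + t - (j:ℤ)))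
      = hgtAt r (wk r l Qm Qn aL N) (N+1+t) := by
    unfold hgtAt
    apply Finset.sum_congr rfl
    intro j hj
    simp only [Finset.mem_Ico] at hj
    exact wk_eq_F t _ (by push_cast; omega)
  show (cIte (_ ∈ Qm ∧ _ ∈ Qn) (bump (F r l Qm Qn aL N t).2 _) _) = _
  unfold quadDec
  rw [hu, hh, aZ_eq_F t]

/-- Hypothesis bundle for the construction. -/
structure Ctx (r : ℕ) (l : ℤ → ℕ) (Qm Qn : Set ℤ) (aL : ℕ → ℕ) (N : ℤ) : Prop where
  hr : 1 ≤ r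
  hl : IsBitSeq l
  hQm : ValidQ r l Qm
  hQn : ValidQ r l Qn
  hNQ : ∀ i ∈ Qm ∪ Qn, N < i
  hNa : ∀ i ≤ N, ∀ h : ℕ, (∑ j ∈ Finset.range r, l (i - (j:ℤ))) ≤ h → aL h = 0

variable (C : Ctx r l Qm Qn aL N)
include C

lemma wk_cases (i : ℤ) : wk r l Qm Qn aL N i = l i ∨ wk r l Qm Qn aL N i = 1 := by
  by_cases hN : i ≤ N
  · exact Or.inl (wk_le_N i hN)
  · rw [wk_rule C.hr i (by omega)]
    by_cases hq : quadDec r l Qm Qn aL N i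
    · rw [cIte_pos hq]; exact Or.inr rfl
    · rw [cIte_neg hq]; exact Or.inl rfl

lemma wk_bit (i : ℤ) : wk r l Qm Qn aL N i ≤ 1 := by
  rcases wk_cases C i with h | h
  · rw [h]; exact C.hl i
  · rw [h]

lemma wk_one_of_l (i : ℤ) (h : l i = 1) : wk r l Qm Qn aL N i = 1 := by
  rcases wk_cases C i with h2 | h2 <;> rw [h2]
  exact h

lemma mem_Q_w (i : ℤ) (hi : i ∈ Qm ∪ Qn) :
    wk r l Qm Qn aL N (i - r) = 1 ∧ l i = 0 := by
  have hprev : (i - r ∈ Qm ∪ Qn ∨ l (i - r) = 1) ∧ l i = 0 := by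
    rcases hi with h | h
    · obtain ⟨h1, h2⟩ := C.hQm.2 i h
      refine ⟨?_, h1⟩
      rcases h2 with h2 | h2
      · exact Or.inl (Set.mem_union_left _ h2)
      · exact Or.inr h2
    · obtain ⟨h1, h2⟩ := C.hQn.2 i h
      refine ⟨?_, h1⟩
      rcases h2 with h2 | h2
      · exact Or.inl (Set.mem_union_right _ h2)
      · exact Or.inr h2
  refine ⟨?_, hprev.2⟩
  rcases hprev.1 with h | h
  · have hN := C.hNQ _ h
    rw [wk_rule C.hr _ hN, cIte_pos (by rcases h with h | h
                                        · exact Or.inl h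
                                        · exact Or.inr (Or.inl h))]
  · exact wk_one_of_l C _ h

lemma quadDec_w (i : ℤ) (hi : N < i) (hq : quadDec r l Qm Qn aL N i) :
    wk r l Qm Qn aL N (i - r) = 1 ∧ l i = 0 := by
  rcases hq with h | h | h
  · exact mem_Q_w C i (Or.inl h)
  · exact mem_Q_w C i (Or.inr h)
  · exact ⟨h.1, h.2.1⟩

/-- window of the witness -/
noncomputable def Win (r : ℕ) (l : ℤ → ℕ) (Qm Qn : Set ℤ) (aL : ℕ → ℕ) (N : ℤ)
    (i : ℤ) : ℕ := ∑ j ∈ Finset.range r, wk r l Qm Qn aL N (i - 1 - (j:ℤ))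

omit C

lemma Win_succ (hr : 1 ≤ r) (i : ℤ) :
    Win r l Qm Qn aL N (i + 1) = wk r l Qm Qn aL N i + hgtAt r (wk r l Qm Qn aL N) i := by
  unfold Win hgtAt
  rw [Finset.range_eq_Ico, Finset.sum_eq_sum_Ico_succ_bot hr]
  congr 1
  · congr 1; ring
  · apply Finset.sum_congr rfl
    intro j hj
    congr 1; ring

lemma Win_eq (hr : 1 ≤ r) (i : ℤ) :
    Win r l Qm Qn aL N i = hgtAt r (wk r l Qm Qn aL N) i + wk r l Qm Qn aL N (i - r) := by
  unfold Win hgtAt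
  have h1 : ∑ j ∈ Finset.range r, wk r l Qm Qn aL N (i - 1 - (j:ℤ))
      = ∑ j ∈ Finset.Ico 1 (r+1), wk r l Qm Qn aL N (i - (j:ℤ)) := by
    rw [Finset.sum_Ico_eq_sum_range]
    apply Finset.sum_congr (by congr 1)
    intro j hj
    congr 1
    push_cast
    ring
  rw [h1, Finset.sum_Ico_succ_top hr]

include C

lemma Win_le_r (i : ℤ) : Win r l Qm Qn aL N i ≤ r := by
  unfold Win
  calc ∑ j ∈ Finset.range r, wk r l Qm Qn aL N (i - 1 - (j:ℤ))
      ≤ ∑ _j ∈ Finset.range r, 1 := Finset.sum_le_sum (fun j _ => wk_bit C _)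
    _ = r := by simp

lemma Win_base (i : ℤ) (hi : i ≤ N + 1) :
    Win r l Qm Qn aL N i = ∑ j ∈ Finset.range r, l (i - 1 - (j:ℤ)) := by
  unfold Win
  apply Finset.sum_congr rfl
  intro j hj
  exact wk_le_N _ (by omega)

/-- The fundamental invariant: `a i` vanishes at heights `≥` the current window. -/
lemma invariant : ∀ i : ℤ, ∀ h : ℕ, Win r l Qm Qn aL N i ≤ h → aZ r l Qm Qn aL N i h = 0 := by
  have base : ∀ i : ℤ, i ≤ N + 1 → ∀ h : ℕ, Win r l Qm Qn aL N i ≤ h →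
      aZ r l Qm Qn aL N i h = 0 := by
    intro i hi h hh
    rw [aZ_le i hi]
    rw [Win_base C i hi] at hh
    exact C.hNa (i - 1) (by omega) h hh
  have step : ∀ t : ℕ, (∀ h : ℕ, Win r l Qm Qn aL N (N + 1 + t) ≤ h →
        aZ r l Qm Qn aL N (N + 1 + t) h = 0) →
      ∀ h : ℕ, Win r l Qm Qn aL N (N + 1 + t + 1) ≤ h →
        aZ r l Qm Qn aL N (N + 1 + t + 1) h = 0 := by
    intro t IH h hh
    set i : ℤ := N + 1 + t with hidef
    have hiN : N < i := by omega
    have hw1 := Win_succ (N := N) (l := l) (Qm := Qm) (Qn := Qn) (aL := aL) C.hr i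
    have hw2 := Win_eq (N := N) (l := l) (Qm := Qm) (Qn := Qn) (aL := aL) C.hr i
    rw [aZ_rule C.hr i hiN]
    by_cases hq : quadDec r l Qm Qn aL N i
    · -- quad case: window is unchanged, height is below it
      obtain ⟨hu, hl0⟩ := quadDec_w C i hiN hq
      have hwi : wk r l Qm Qn aL N i = 1 := by
        rw [wk_rule C.hr i hiN, cIte_pos hq]
      have hWin : Win r l Qm Qn aL N (i+1) = Win r l Qm Qn aL N i := by omega
      have hhgt : hgtAt r (wk r l Qm Qn aL N) i + 1 = Win r l Qm Qn aL N i := by omega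
      have hne : h ≠ hgtAt r (wk r l Qm Qn aL N) i := by omega
      have hIH := IH h (by omega)
      by_cases hmn : i ∈ Qm ∧ i ∈ Qn
      · rw [cIte_pos hmn]
        unfold bump
        rw [if_neg hne, hIH]
      · rw [cIte_neg hmn]
        by_cases hd : quadDec r l Qm Qn aL N i ∧ i ∉ Qm ∧ i ∉ Qn
        · rw [cIte_pos hd]
          unfold drop
          rw [if_neg hne, hIH]
        · rw [cIte_neg hd]
          exact hIH
    · -- no quad: a is unchanged
      have hwi : wk r l Qm Qn aL N i = l i := by
        rw [wk_rule C.hr i hiN, cIte_neg hq]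
      have hnm : i ∉ Qm := fun hc => hq (Or.inl hc)
      have hnn : i ∉ Qn := fun hc => hq (Or.inr (Or.inl hc))
      rw [cIte_neg (by tauto), cIte_neg (by tauto)]
      by_cases hc : wk r l Qm Qn aL N (i - r) = 1 ∧ l i = 0
      · -- window decreases by one; the freed height has a i vanish by the rule
        have hz : aZ r l Qm Qn aL N i (hgtAt r (wk r l Qm Qn aL N) i) = 0 := by
          by_contra hcc
          exact hq (Or.inr (Or.inr ⟨hc.1, hc.2, Nat.pos_of_ne_zero hcc⟩))
        have hWin : Win r l Qm Qn aL N (i+1) + 1 = Win r l Qm Qn aL N i := by omega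
        rcases Nat.lt_or_ge h (Win r l Qm Qn aL N i) with hlt | hge
        · have : h = hgtAt r (wk r l Qm Qn aL N) i := by omega
          rw [this]; exact hz
        · exact IH h hge
      · -- window does not decrease
        have hub := wk_bit C (i - r)
        have hlb := C.hl i
        have : Win r l Qm Qn aL N i ≤ Win r l Qm Qn aL N (i + 1) := by
          rcases Nat.lt_or_ge (wk r l Qm Qn aL N (i - r)) 1 with h1 | h1
          · omega
          · have : l i = 1 := by
              rcases Nat.eq_zero_or_pos (l i) with h2 | h2
              · exact absurd ⟨by omega, h2⟩ hc
              · omega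
            omega
        exact IH h (by omega)
  intro i
  by_cases hi : i ≤ N + 1
  · exact base i hi
  · obtain ⟨t, rfl⟩ : ∃ t : ℕ, i = N + 1 + t + 1 := ⟨(i - N - 2).toNat, by omega⟩
    clear hi
    induction t with
    | zero =>
      exact step 0 (base _ (by omega))
    | succ u ihu =>
      have : (N + 1 + (u:ℤ) + 1) = N + 1 + ((u+1 : ℕ) : ℤ) := by push_cast; ring
      exact step (u+1) (by rw [← this]; exact ihu)

/-- The quad set produced by the construction. -/
def QsetC (r : ℕ) (l : ℤ → ℕ) (Qm Qn : Set ℤ) (aL : ℕ → ℕ) (N : ℤ) : Set ℤ :=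
  {i | N < i ∧ quadDec r l Qm Qn aL N i}

lemma mem_Qset_iff (i : ℤ) :
    i ∈ QsetC r l Qm Qn aL N ↔ (wk r l Qm Qn aL N i = 1 ∧ l i = 0) := by
  constructor
  · rintro ⟨hN, hq⟩
    refine ⟨?_, (quadDec_w C i hN hq).2⟩
    rw [wk_rule C.hr i hN, cIte_pos hq]
  · rintro ⟨hw, hl0⟩
    by_cases hN : N < i
    · refine ⟨hN, ?_⟩
      by_contra hq
      rw [wk_rule C.hr i hN, cIte_neg hq] at hw
      omega
    · rw [wk_le_N i (by omega)] at hw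
      omega

lemma Qm_subset_Qset : Qm ⊆ QsetC r l Qm Qn aL N := by
  intro i hi
  exact ⟨C.hNQ i (Set.mem_union_left _ hi), Or.inl hi⟩

lemma Qn_subset_Qset : Qn ⊆ QsetC r l Qm Qn aL N := by
  intro i hi
  exact ⟨C.hNQ i (Set.mem_union_right _ hi), Or.inr (Or.inl hi)⟩

lemma wk_eq_mkW : wk r l Qm Qn aL N = mkW (QsetC r l Qm Qn aL N) l := by
  funext i
  unfold mkW
  by_cases h : i ∈ QsetC r l Qm Qn aL N
  · rw [if_pos h]
    exact ((mem_Qset_iff C i).1 h).1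
  · rw [if_neg h]
    rcases wk_cases C i with h2 | h2
    · exact h2
    · rcases Nat.eq_zero_or_pos (l i) with h3 | h3
      · exact absurd ((mem_Qset_iff C i).2 ⟨h2, h3⟩) h
      · have := C.hl i
        omega

lemma Qset_chain (i : ℤ) (hi : i ∈ QsetC r l Qm Qn aL N) :
    l i = 0 ∧ (i - r ∈ QsetC r l Qm Qn aL N ∨ l (i - r) = 1) := by
  obtain ⟨hN, hq⟩ := hi
  obtain ⟨hu, hl0⟩ := quadDec_w C i hN hq
  refine ⟨hl0, ?_⟩
  rcases Nat.eq_zero_or_pos (l (i - r)) with h3 | h3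
  · exact Or.inl ((mem_Qset_iff C _).2 ⟨hu, h3⟩)
  · right
    have := C.hl (i - r)
    omega

lemma hgt_lt_r (i : ℤ) : hgtAt r (wk r l Qm Qn aL N) i < r := by
  have : hgtAt r (wk r l Qm Qn aL N) i ≤ r - 1 := by
    unfold hgtAt
    calc ∑ j ∈ Finset.Ico 1 r, wk r l Qm Qn aL N (i - (j:ℤ))
        ≤ ∑ _j ∈ Finset.Ico 1 r, 1 := Finset.sum_le_sum (fun j _ => wk_bit C _)
      _ = r - 1 := by rw [Finset.sum_const, Nat.card_Ico, smul_eq_mul, mul_one]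
  have := C.hr
  omega

/-- total mass of a vector -/
def mass (r : ℕ) (A : ℕ → ℕ) : ℕ := ∑ h ∈ Finset.range r, A h

omit C

lemma mass_bump (hr : 1 ≤ r) (A : ℕ → ℕ) (h0 : ℕ) (hh0 : h0 < r) :
    mass r (bump A h0) = mass r A + 1 := by
  unfold mass bump
  rw [Finset.sum_add_distrib]
  congr 1
  rw [Finset.sum_ite_eq' (Finset.range r) h0 (fun _ => 1),
    if_pos (Finset.mem_range.2 hh0)]

lemma mass_drop (hr : 1 ≤ r) (A : ℕ → ℕ) (h0 : ℕ) (hh0 : h0 < r) (hpos : 0 < A h0) :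
    mass r (drop A h0) + 1 = mass r A := by
  unfold mass drop
  have hsub : ∀ h ∈ Finset.range r, (if h = h0 then 1 else 0) ≤ A h := by
    intro h _
    split
    · rename_i he; rw [he]; omega
    · omega
  rw [Finset.sum_tsub_distrib _ hsub, Finset.sum_ite_eq' (Finset.range r) h0 (fun _ => 1),
    if_pos (Finset.mem_range.2 hh0)]
  have : 1 ≤ ∑ h ∈ Finset.range r, A h :=
    le_trans hpos (Finset.single_le_sum (f := A) (fun _ _ => Nat.zero_le _)
      (Finset.mem_range.2 hh0))
  omega

include C

/-- the extra quads -/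
def extraAt (r : ℕ) (l : ℤ → ℕ) (Qm Qn : Set ℤ) (aL : ℕ → ℕ) (N : ℤ) (i : ℤ) : Prop :=
  quadDec r l Qm Qn aL N i ∧ i ∉ Qm ∧ i ∉ Qn

lemma mass_count (t : ℕ) :
    mass r (aZ r l Qm Qn aL N (N + 1 + t))
      + ((Finset.range t).filter (fun u : ℕ => extraAt r l Qm Qn aL N (N + 1 + (u:ℤ)))).card
    = mass r aL
      + ((Finset.range t).filter (fun u : ℕ => (N + 1 + (u:ℤ)) ∈ Qm ∧ (N + 1 + (u:ℤ)) ∈ Qn)).card := by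
  induction t with
  | zero =>
    simp [aZ_le (N + 1) (le_refl _)]
  | succ t ih =>
    have hstep : (N + 1 + ((t+1:ℕ) : ℤ)) = (N + 1 + (t:ℤ)) + 1 := by push_cast; ring
    rw [hstep, aZ_rule C.hr _ (by omega)]
    rw [Finset.range_add_one, Finset.filter_insert, Finset.filter_insert]
    set i : ℤ := N + 1 + t with hidef
    have hnot : t ∉ Finset.range t := by simp
    by_cases hmn : i ∈ Qm ∧ i ∈ Qn
    · rw [cIte_pos hmn, mass_bump C.hr _ _ (hgt_lt_r C i)]
      rw [if_neg (by unfold extraAt; tauto), if_pos hmn,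
        Finset.card_insert_of_notMem (by simp [hnot])]
      omega
    · rw [cIte_neg hmn, if_neg hmn]
      by_cases hd : quadDec r l Qm Qn aL N i ∧ i ∉ Qm ∧ i ∉ Qn
      · have hpos : 0 < aZ r l Qm Qn aL N i (hgtAt r (wk r l Qm Qn aL N) i) := by
          rcases hd.1 with h | h | h
          · exact absurd h hd.2.1
          · exact absurd h hd.2.2
          · exact h.2.2
        rw [cIte_pos hd, if_pos (show extraAt r l Qm Qn aL N i from hd),
          Finset.card_insert_of_notMem (by simp [hnot])]
        have := mass_drop C.hr (aZ r l Qm Qn aL N i) _ (hgt_lt_r C i) hpos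
        omega
      · rw [cIte_neg hd, if_neg (fun hc : extraAt r l Qm Qn aL N i => hd hc)]
        omega

lemma extra_finite : {i : ℤ | N < i ∧ extraAt r l Qm Qn aL N i}.Finite := by
  by_contra hinf
  rw [← Set.not_infinite, not_not] at hinf
  set Cb : ℕ := mass r aL + ((C.hQm.1.inter_of_left Qn).toFinset).card with hCb
  -- the count of extra steps in any initial segment is at most Cb
  have hcount : ∀ t : ℕ,
      ((Finset.range t).filter
        (fun u : ℕ => extraAt r l Qm Qn aL N (N + 1 + (u:ℤ)))).card ≤ Cb := by
    intro t
    have h1 := mass_count C t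
    have h2 : ((Finset.range t).filter
        (fun u : ℕ => (N + 1 + (u:ℤ)) ∈ Qm ∧ (N + 1 + (u:ℤ)) ∈ Qn)).card
        ≤ ((C.hQm.1.inter_of_left Qn).toFinset).card := by
      apply Finset.card_le_card_of_injOn (fun u : ℕ => N + 1 + (u:ℤ))
      · intro u hu
        rw [Finset.mem_coe, Finset.mem_filter] at hu
        rw [Finset.mem_coe, Set.Finite.mem_toFinset]
        exact ⟨hu.2.1, hu.2.2⟩
      · intro u1 _ u2 _ he
        simp only at he
        omega
    omega
  obtain ⟨S, hSsub, hScard⟩ := hinf.exists_subset_card_eq (Cb + 1)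
  set T : ℕ := S.sup (fun i => (i - N).toNat) with hT
  have hmap : S.card ≤ ((Finset.range T).filter
      (fun u : ℕ => extraAt r l Qm Qn aL N (N + 1 + (u:ℤ)))).card := by
    apply Finset.card_le_card_of_injOn (fun i : ℤ => (i - N - 1).toNat)
    · intro i hi
      have hiE := hSsub hi
      have hiN : N < i := hiE.1
      have hle : (i - N).toNat ≤ T := Finset.le_sup (f := fun i : ℤ => (i - N).toNat) hi
      simp only [Finset.mem_coe, Finset.mem_filter, Finset.mem_range]
      constructor
      · omega
      · have : (N + 1 + (((i - N - 1).toNat : ℕ) : ℤ)) = i := by omega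
        rw [this]
        exact hiE.2
    · intro i1 h1 i2 h2 he
      have hN1 : N < i1 := (hSsub h1).1
      have hN2 : N < i2 := (hSsub h2).1
      simp only at he
      omega
  have := hcount T
  omega

lemma Qset_subset :
    QsetC r l Qm Qn aL N ⊆ Qm ∪ Qn ∪ {i : ℤ | N < i ∧ extraAt r l Qm Qn aL N i} := by
  rintro i ⟨hN, hq⟩
  by_cases hm : i ∈ Qm
  · exact Or.inl (Or.inl hm)
  by_cases hn : i ∈ Qn
  · exact Or.inl (Or.inr hn)
  · exact Or.inr ⟨hN, hq, hm, hn⟩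

lemma Qset_valid : ValidQ r l (QsetC r l Qm Qn aL N) := by
  refine ⟨?_, fun i hi => Qset_chain C i hi⟩
  exact (((C.hQm.1.union C.hQn.1).union (extra_finite C)).subset (Qset_subset C))

omit C in
lemma window_split (hr : 1 ≤ r) (g : ℤ → ℕ) (i : ℤ) :
    ∑ j ∈ Finset.range r, g (i - (j:ℤ)) = g i + ∑ j ∈ Finset.Ico 1 r, g (i - (j:ℤ)) := by
  rw [Finset.range_eq_Ico, Finset.sum_eq_sum_Ico_succ_bot hr]
  congr 2
  ring

lemma wk_notin (i : ℤ) (hi : i ∉ QsetC r l Qm Qn aL N) : wk r l Qm Qn aL N i = l i := by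
  rw [wk_eq_mkW C]
  unfold mkW
  rw [if_neg hi]

lemma aZ_step_eq (i : ℤ) (hi : i ∉ QsetC r l Qm Qn aL N) :
    aZ r l Qm Qn aL N i = aZ r l Qm Qn aL N (i + 1) := by
  by_cases hN : N < i
  · have hq : ¬ quadDec r l Qm Qn aL N i := fun h => hi ⟨hN, h⟩
    rw [aZ_rule C.hr i hN, cIte_neg (fun hmn => hq (Or.inl hmn.1)),
      cIte_neg (fun hd => hq hd.1)]
  · rw [aZ_le i (by omega), aZ_le (i+1) (by omega)]

lemma aZ_stable (i1 i2 : ℤ) (h12 : i1 ≤ i2)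
    (hq : ∀ j, i1 ≤ j → j < i2 → j ∉ QsetC r l Qm Qn aL N) :
    aZ r l Qm Qn aL N i1 = aZ r l Qm Qn aL N i2 := by
  obtain ⟨d, rfl⟩ : ∃ d : ℕ, i2 = i1 + d := ⟨(i2 - i1).toNat, by omega⟩
  clear h12
  induction d with
  | zero => norm_num
  | succ d ih =>
    have h1 : i1 + ((d+1 : ℕ) : ℤ) = (i1 + d) + 1 := by push_cast; ring
    rw [h1, ← aZ_step_eq C _ (hq (i1 + d) (by omega) (by push_cast; omega))]
    exact ih (fun j hj1 hj2 => hq j hj1 (by push_cast at hj2 ⊢; omega))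

lemma aZ_below (i : ℤ) (hq : ∀ j, j < i → j ∉ QsetC r l Qm Qn aL N) :
    aZ r l Qm Qn aL N i = aL := by
  by_cases hN : i ≤ N + 1
  · exact aZ_le i hN
  · rw [← aZ_stable C (N+1) i (by omega) (fun j hj1 hj2 => hq j hj2)]
    exact aZ_le _ (le_refl _)

lemma aZ_bump (i : ℤ) (hm : i ∈ Qm) (hn : i ∈ Qn) :
    aZ r l Qm Qn aL N (i + 1)
      = bump (aZ r l Qm Qn aL N i) (hgtAt r (wk r l Qm Qn aL N) i) := by
  rw [aZ_rule C.hr i (C.hNQ i (Set.mem_union_left _ hm)), cIte_pos ⟨hm, hn⟩]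

lemma aZ_drop (i : ℤ) (hq : i ∈ QsetC r l Qm Qn aL N) (hm : i ∉ Qm) (hn : i ∉ Qn) :
    aZ r l Qm Qn aL N (i + 1)
      = drop (aZ r l Qm Qn aL N i) (hgtAt r (wk r l Qm Qn aL N) i)
    ∧ 0 < aZ r l Qm Qn aL N i (hgtAt r (wk r l Qm Qn aL N) i) := by
  obtain ⟨hN, hqd⟩ := hq
  constructor
  · rw [aZ_rule C.hr i hN, cIte_neg (fun hmn => hm hmn.1), cIte_pos ⟨hqd, hm, hn⟩]
  · rcases hqd with h | h | h
    · exact absurd h hm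
    · exact absurd h hn
    · exact h.2.2

lemma aZ_one (i : ℤ) (hq : i ∈ QsetC r l Qm Qn aL N) (hmn : ¬(i ∈ Qm ∧ i ∈ Qn))
    (hor : i ∈ Qm ∨ i ∈ Qn) :
    aZ r l Qm Qn aL N i = aZ r l Qm Qn aL N (i + 1) := by
  rw [aZ_rule C.hr i hq.1, cIte_neg hmn,
    cIte_neg (fun hd => by rcases hor with h | h
                           · exact hd.2.1 h
                           · exact hd.2.2 h)]

/-- Condition (1) of the definition holds for the constructed data. -/
lemma aZ_vanish (i : ℤ) (hne : wk r l Qm Qn aL N (i - r) ≠ wk r l Qm Qn aL N i) :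
    aZ r l Qm Qn aL N i (hgtAt r (wk r l Qm Qn aL N) i) = 0 := by
  have hbu := wk_bit C (i - r)
  have hbw := wk_bit C i
  rcases Nat.lt_or_ge (wk r l Qm Qn aL N (i - r)) 1 with h1 | h1
  · -- 0 → 1 step: use the invariant
    have hu0 : wk r l Qm Qn aL N (i - r) = 0 := by omega
    apply invariant C i
    rw [Win_eq C.hr i, hu0]
    omega
  · -- 1 → 0 step
    have hu1 : wk r l Qm Qn aL N (i - r) = 1 := by omega
    have hw0 : wk r l Qm Qn aL N i = 0 := by omega
    have hl0 : l i = 0 := by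
      rcases wk_cases C i with h | h
      · omega
      · omega
    by_cases hN : N < i
    · by_contra hpos
      have hqd : quadDec r l Qm Qn aL N i :=
        Or.inr (Or.inr ⟨hu1, hl0, Nat.pos_of_ne_zero hpos⟩)
      rw [wk_rule C.hr i hN, cIte_pos hqd] at hw0
      omega
    · -- below the base point
      push_neg at hN
      rw [aZ_le i (by omega)]
      have hwl : ∀ j : ℤ, j ≤ N → wk r l Qm Qn aL N j = l j := fun j hj => wk_le_N j hj
      have hh : hgtAt r (wk r l Qm Qn aL N) i = ∑ j ∈ Finset.Ico 1 r, l (i - (j:ℤ)) := by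
        unfold hgtAt
        apply Finset.sum_congr rfl
        intro j hj
        simp only [Finset.mem_Ico] at hj
        exact hwl _ (by omega)
      rw [hh]
      apply C.hNa i hN
      rw [window_split C.hr l i, hl0]
      omega

lemma Win_top (i : ℤ) (hq : ∀ p : ℤ, p ∈ QsetC r l Qm Qn aL N → p < i - r) :
    Win r l Qm Qn aL N i = ∑ j ∈ Finset.range r, l (i - 1 - (j:ℤ)) := by
  unfold Win
  apply Finset.sum_congr rfl
  intro j hj
  simp only [Finset.mem_range] at hj
  apply wk_notin C
  intro hc
  have := hq _ hc
  omega

end Construction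

section Liminf

variable {r : ℕ} {l : ℤ → ℕ}

lemma window_le_r (hl : IsBitSeq l) (i : ℤ) :
    ∑ j ∈ Finset.range r, l (i - (j:ℤ)) ≤ r := by
  calc ∑ j ∈ Finset.range r, l (i - (j:ℤ)) ≤ ∑ _j ∈ Finset.range r, 1 :=
        Finset.sum_le_sum (fun j _ => hl _)
    _ = r := by simp

lemma liminf_atBot_eventually (hl : IsBitSeq l) :
    ∃ N0 : ℤ, ∀ i ≤ N0,
      Filter.liminf (fun i : ℤ => ∑ j ∈ Finset.range r, l (i - (j:ℤ))) Filter.atBot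
        ≤ ∑ j ∈ Finset.range r, l (i - (j:ℤ)) := by
  set S := {a : ℕ | ∀ᶠ i in (Filter.atBot : Filter ℤ), a ≤ ∑ j ∈ Finset.range r, l (i - (j:ℤ))}
    with hS
  have hliminf : Filter.liminf (fun i : ℤ => ∑ j ∈ Finset.range r, l (i - (j:ℤ)))
      Filter.atBot = sSup S := Filter.liminf_eq
  have hne : S.Nonempty := ⟨0, Filter.Eventually.of_forall (fun _ => Nat.zero_le _)⟩
  have hbdd : BddAbove S := by
    refine ⟨r, fun a ha => ?_⟩
    obtain ⟨i, hi⟩ := ha.exists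
    exact le_trans hi (window_le_r hl i)
  have hmem : sSup S ∈ S := Nat.sSup_mem hne hbdd
  rw [hS] at hmem
  obtain ⟨N0, hN0⟩ := Filter.eventually_atBot.1 hmem
  exact ⟨N0, fun i hi => hliminf ▸ hN0 i hi⟩

lemma liminf_atTop_frequently (hl : IsBitSeq l) (h : ℕ)
    (hle : Filter.liminf (fun i : ℤ => ∑ j ∈ Finset.range r, l (i - (j:ℤ)))
      Filter.atTop ≤ h) :
    ∀ M : ℤ, ∃ i : ℤ, M ≤ i ∧ ∑ j ∈ Finset.range r, l (i - (j:ℤ)) ≤ h := by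
  intro M
  by_contra hc
  push_neg at hc
  have hev : ∀ᶠ i in (Filter.atTop : Filter ℤ),
      h + 1 ≤ ∑ j ∈ Finset.range r, l (i - (j:ℤ)) :=
    Filter.eventually_atTop.2 ⟨M, fun i hi => hc i hi⟩
  have hbdd : BddAbove {a : ℕ | ∀ᶠ i in (Filter.atTop : Filter ℤ),
      a ≤ ∑ j ∈ Finset.range r, l (i - (j:ℤ))} := by
    refine ⟨r, fun a ha => ?_⟩
    obtain ⟨i, hi⟩ := ha.exists
    exact le_trans hi (window_le_r hl i)
  have : h + 1 ≤ Filter.liminf (fun i : ℤ => ∑ j ∈ Finset.range r, l (i - (j:ℤ)))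
      Filter.atTop := by
    rw [Filter.liminf_eq]
    exact le_csSup hbdd hev
  omega

end Liminf

end Stmt13

-- Main theorem.


open Stmt13 in
theorem stmt13 (r : ℕ) (hr : 1 ≤ r) (l m n : ℤ → ℕ)
    (hl : IsBitSeq l) (hm : IsBitSeq m) (hn : IsBitSeq n)
    (hml : HStrip r l m) (hnl : HStrip r l n)
    (aL : ℕ → ℕ) (haL : Supported r aL)
    (hvan : ∀ h : ℕ,
      Filter.liminf (fun i : ℤ => ∑ j ∈ Finset.range r, l (i - (j : ℤ))) Filter.atBot ≤ h →
      h < r → aL h = 0) :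
    ∃ (k : ℤ → ℕ) (aG : ℕ → ℕ),
      (IsBitSeq k ∧ Supported r aG ∧ IsBSC r l m n k aL aG ∧
        (∀ h : ℕ,
          Filter.liminf (fun i : ℤ => ∑ j ∈ Finset.range r, l (i - (j : ℤ)))
              Filter.atTop ≤ h →
          h < r → aG h = 0)) ∧
      ∀ (k' : ℤ → ℕ) (aG' : ℕ → ℕ),
        IsBitSeq k' → Supported r aG' → IsBSC r l m n k' aL aG' → k' = k ∧ aG' = aG := by
  classical
  obtain ⟨Qm, hQm, hwm, hmT, hQmiff⟩ := witness_toQ (theWitness_spec hml)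
  obtain ⟨Qn, hQn, hwn, hnT, hQniff⟩ := witness_toQ (theWitness_spec hnl)
  obtain ⟨N0, hN0⟩ := liminf_atBot_eventually (r := r) hl
  have hfinmn : (Qm ∪ Qn).Finite := hQm.1.union hQn.1
  obtain ⟨B, hB⟩ := hfinmn.bddBelow
  set N : ℤ := min N0 (B - 1) with hNdef
  have hNN0 : N ≤ N0 := min_le_left _ _
  have hNB : N ≤ B - 1 := min_le_right _ _
  have hNQ : ∀ i ∈ Qm ∪ Qn, N < i := by
    intro i hi
    have := hB hi
    omega
  have hNa : ∀ i ≤ N, ∀ h : ℕ, (∑ j ∈ Finset.range r, l (i - (j:ℤ))) ≤ h → aL h = 0 := by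
    intro i hi h hfh
    by_cases hhr : h < r
    · exact hvan h (le_trans (hN0 i (by omega)) hfh) hhr
    · exact haL h (by omega)
  have C : Ctx r l Qm Qn aL N := ⟨hr, hl, hQm, hQn, hNQ, hNa⟩
  set Qs : Set ℤ := QsetC r l Qm Qn aL N with hQsdef
  have hQs : ValidQ r l Qs := Qset_valid C
  have hQmsub : Qm ⊆ Qs := Qm_subset_Qset C
  have hQnsub : Qn ⊆ Qs := Qn_subset_Qset C
  obtain ⟨hvm, hkm⟩ := validQ_diff hQs hQm hQmsub
  obtain ⟨hvn, hkn⟩ := validQ_diff hQs hQn hQnsub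
  rw [← hmT] at hvm hkm
  rw [← hnT] at hvn hkn
  obtain ⟨Mb, hMb⟩ := hQs.1.bddAbove
  set M : ℤ := max (N+1) (Mb+1) with hMdef
  have hMN : N + 1 ≤ M := le_max_left _ _
  have hMQ : ∀ j ∈ Qs, j < M := by
    intro j hj
    have h1 := hMb hj
    have h2 : Mb + 1 ≤ M := le_max_right _ _
    omega
  refine ⟨mkT r Qs l, aZ r l Qm Qn aL N M,
    ⟨mkT_bit hl, fun h hh => invariant C M h (le_trans (Win_le_r C M) hh),
     ⟨hml, hnl, ?_, ?_, hstrip_mk hQs, ?_⟩, ?_⟩, ?_⟩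
  · rw [← hkm]
    exact hstrip_mk hvm
  · rw [← hkn]
    exact hstrip_mk hvn
  · -- the map a
    intro w hw
    have hweq : w = wk r l Qm Qn aL N := by
      have h1 := witness_unique hr hw (isWitness_mk hQs)
      rw [h1, ← wk_eq_mkW C]
    subst hweq
    have hquad : ∀ i, Quad r l (mkT r Qs l) (wk r l Qm Qn aL N) i ↔ i ∈ Qs := by
      intro i
      rw [wk_eq_mkW C]
      exact quad_mk_iff hQs i
    have hribmk : ∀ i, RibbonAt r m (mkT r Qs l) i ↔ (i ∈ Qs ∧ i ∉ Qm) := by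
      intro i
      rw [← hkm]
      exact ribbonAt_mk hr hvm i
    have hribnk : ∀ i, RibbonAt r n (mkT r Qs l) i ↔ (i ∈ Qs ∧ i ∉ Qn) := by
      intro i
      rw [← hkn]
      exact ribbonAt_mk hr hvn i
    refine ⟨aZ r l Qm Qn aL N, fun i => ⟨?_, ?_, ?_, ?_, ?_, ?_, ?_⟩⟩
    · intro hnq
      exact aZ_step_eq C i (fun hc => hnq ((hquad i).2 hc))
    · intro hne
      exact aZ_vanish C i hne
    · intro hq hrm hrn
      exact aZ_bump C i ((hQmiff i).1 hrm) ((hQniff i).1 hrn)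
    · intro hq hrm hrn
      have hiQs := (hquad i).1 hq
      have hm' : i ∉ Qm := ((hribmk i).1 hrm).2
      have hn' : i ∉ Qn := ((hribnk i).1 hrn).2
      obtain ⟨hdrop, hpos⟩ := aZ_drop C i hiQs hm' hn'
      funext h
      show aZ r l Qm Qn aL N i h = aZ r l Qm Qn aL N (i+1) h + _
      rw [hdrop]
      unfold drop
      by_cases hh : h = hgtAt r (wk r l Qm Qn aL N) i
      · rw [if_pos hh]
        subst hh
        omega
      · rw [if_neg hh]
        omega
    · intro hq hnmn hnkk
      have hiQs := (hquad i).1 hq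
      have hor : i ∈ Qm ∨ i ∈ Qn := by
        by_contra hc
        push_neg at hc
        exact hnkk ⟨(hribmk i).2 ⟨hiQs, hc.1⟩, (hribnk i).2 ⟨hiQs, hc.2⟩⟩
      exact aZ_one C i hiQs
        (fun hmn => hnmn ⟨(hQmiff i).2 hmn.1, (hQniff i).2 hmn.2⟩) hor
    · intro hbelow
      exact aZ_below C i (fun j hj hc => hbelow j hj ((hquad j).2 hc))
    · intro habove
      by_cases hiM : i ≤ M
      · exact aZ_stable C i M hiM (fun j hj1 hj2 hc => habove j hj1 ((hquad j).2 hc))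
      · exact (aZ_stable C M i (by omega)
          (fun j hj1 hj2 hc => absurd (hMQ j hc) (by omega))).symm
  · -- vanishing of aG at +∞
    intro h hlim hhr
    obtain ⟨i1, hi1M, hi1f⟩ := liminf_atTop_frequently hl h hlim (M + r)
    have hstab : aZ r l Qm Qn aL N M = aZ r l Qm Qn aL N (i1 + 1) :=
      aZ_stable C M (i1+1) (by omega) (fun j hj1 hj2 hc => absurd (hMQ j hc) (by omega))
    rw [hstab]
    apply invariant C (i1 + 1) h
    rw [Win_top C (i1+1) (fun p hp => by have := hMQ p hp; omega)]
    have heq : ∀ j ∈ Finset.range r, l ((i1 + 1) - 1 - (j:ℤ)) = l (i1 - (j:ℤ)) := by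
      intro j _
      congr 1
      ring
    rw [Finset.sum_congr rfl heq]
    exact hi1f
  · -- uniqueness
    intro k' aG' hk'bit hsupG' hBSC'
    obtain ⟨-, -, hmk', hnk', hlk', hacl⟩ := hBSC'
    obtain ⟨Q', hQ', hw', hk'T, hQ'iff⟩ := witness_toQ (theWitness_spec hlk')
    obtain ⟨Q2m, hQ2m, hw2m, hk2m, hQ2miff⟩ := witness_toQ (theWitness_spec hmk')
    obtain ⟨Q2n, hQ2n, hw2n, hk2n, hQ2niff⟩ := witness_toQ (theWitness_spec hnk')
    rw [hmT] at hQ2m hk2m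
    rw [hnT] at hQ2n hk2n
    have hd1 := quad_decompose hr hQm hQ' hQ2m (by rw [← hk2m, ← hk'T])
    have hd2 := quad_decompose hr hQn hQ' hQ2n (by rw [← hk2n, ← hk'T])
    have hQ2m_iff : ∀ i, i ∈ Q2m ↔ (i ∈ Q' ∧ i ∉ Qm) := by
      intro i
      constructor
      · intro h
        exact ⟨(hd1.1 i).2 (Or.inr h), fun hm2 => hd1.2 i ⟨hm2, h⟩⟩
      · rintro ⟨h1, h2⟩
        rcases (hd1.1 i).1 h1 with h | h
        · exact absurd h h2
        · exact h
    have hQ2n_iff : ∀ i, i ∈ Q2n ↔ (i ∈ Q' ∧ i ∉ Qn) := by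
      intro i
      constructor
      · intro h
        exact ⟨(hd2.1 i).2 (Or.inr h), fun hn2 => hd2.2 i ⟨hn2, h⟩⟩
      · rintro ⟨h1, h2⟩
        rcases (hd2.1 i).1 h1 with h | h
        · exact absurd h h2
        · exact h
    have hQmsub' : Qm ⊆ Q' := fun i hi => (hd1.1 i).2 (Or.inl hi)
    have hQnsub' : Qn ⊆ Q' := fun i hi => (hd2.1 i).2 (Or.inl hi)
    obtain ⟨a', ha'⟩ := hacl _ (theWitness_spec hlk')
    obtain ⟨Bb, hBb⟩ := hQ'.1.bddBelow
    set b : ℤ := min (N+1) Bb with hbdef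
    have hbN : b ≤ N + 1 := min_le_left _ _
    have hbB : b ≤ Bb := min_le_right _ _
    have hbQ' : ∀ j : ℤ, j < b → j ∉ Q' := fun j hj hc => absurd (hBb hc) (by omega)
    have hbQs : ∀ j : ℤ, j < b → j ∉ Qs := by
      intro j hj hc
      have := hc.1
      omega
    have hclaim : ∀ t : ℕ, (∀ j : ℤ, j < b + t → (j ∈ Q' ↔ j ∈ Qs)) ∧
        a' (b + t) = aZ r l Qm Qn aL N (b + t) := by
      intro t
      induction t with
      | zero =>
        constructor
        · intro j hj
          have hj' : j < b := by push_cast at hj; omega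
          exact iff_of_false (hbQ' j hj') (hbQs j hj')
        · have h5 := (ha' b).2.2.2.2.2.1 (fun j hj hq => absurd ((hQ'iff j).1 hq) (hbQ' j hj))
          have hcast : b + ((0:ℕ):ℤ) = b := by push_cast; ring
          rw [hcast, h5, aZ_le _ (by omega)]
      | succ t ih =>
        set i : ℤ := b + (t:ℕ) with hidef
        have hcast : b + ((t+1:ℕ):ℤ) = i + 1 := by rw [hidef]; push_cast; ring
        have hmem : ∀ j, j < i → (j ∈ Q' ↔ j ∈ Qs) := ih.1
        have hai : a' i = aZ r l Qm Qn aL N i := ih.2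
        have hwag : ∀ j : ℤ, j < i → theWitness r l k' j = wk r l Qm Qn aL N j := by
          intro j hj
          rw [hw', wk_eq_mkW C]
          unfold mkW
          by_cases hjq : j ∈ Q'
          · rw [if_pos hjq, if_pos ((hmem j hj).1 hjq)]
          · rw [if_neg hjq, if_neg (fun hc => hjq ((hmem j hj).2 hc))]
        have hhagree : hgtAt r (theWitness r l k') i = hgtAt r (wk r l Qm Qn aL N) i := by
          unfold hgtAt
          apply Finset.sum_congr rfl
          intro j hj
          simp only [Finset.mem_Ico] at hj
          exact hwag _ (by omega)
        have huag : theWitness r l k' (i - r) = wk r l Qm Qn aL N (i - r) :=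
          hwag _ (by omega)
        have hkey : (i ∈ Q' ↔ i ∈ Qs) ∧ a' (i+1) = aZ r l Qm Qn aL N (i+1) := by
          by_cases hNi : N < i
          · have hiff : (i ∈ Q' ↔ i ∈ Qs) := by
              constructor
              · intro hc
                refine ⟨hNi, ?_⟩
                by_cases hm2 : i ∈ Qm
                · exact Or.inl hm2
                by_cases hn2 : i ∈ Qn
                · exact Or.inr (Or.inl hn2)
                have h3 := (ha' i).2.2.2.1 ((hQ'iff i).2 hc)
                    ((hQ2miff i).2 ((hQ2m_iff i).2 ⟨hc, hm2⟩))
                    ((hQ2niff i).2 ((hQ2n_iff i).2 ⟨hc, hn2⟩))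
                have h4 := congrFun h3 (hgtAt r (theWitness r l k') i)
                rw [if_pos rfl] at h4
                refine Or.inr (Or.inr ⟨?_, (hQ'.2 i hc).1, ?_⟩)
                · rw [← huag, hw']
                  unfold mkW
                  rcases (hQ'.2 i hc).2 with h | h
                  · rw [if_pos h]
                  · split
                    · rfl
                    · exact h
                · rw [← hhagree, ← hai]
                  omega
              · rintro ⟨hNi2, hqd⟩
                rcases hqd with h | h | h
                · exact hQmsub' h
                · exact hQnsub' h
                · by_contra hc
                  have hwiv : theWitness r l k' i = l i := by
                    rw [hw']
                    unfold mkW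
                    rw [if_neg hc]
                  have hne : theWitness r l k' (i - (r:ℕ)) ≠ theWitness r l k' i := by
                    rw [huag, hwiv, h.1, h.2.1]
                    omega
                  have h1c := (ha' i).2.1 hne
                  rw [hhagree, hai] at h1c
                  have := h.2.2
                  omega
            refine ⟨hiff, ?_⟩
            by_cases hc : i ∈ Q'
            · have hiQs : i ∈ Qs := hiff.1 hc
              by_cases hm2 : i ∈ Qm
              · by_cases hn2 : i ∈ Qn
                · have h2 := (ha' i).2.2.1 ((hQ'iff i).2 hc)
                      ((hQmiff i).2 hm2) ((hQniff i).2 hn2)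
                  rw [h2, aZ_bump C i hm2 hn2]
                  funext h
                  show a' i h + _ = bump (aZ r l Qm Qn aL N i) _ h
                  unfold bump
                  rw [hai, hhagree]
                · have h4 := (ha' i).2.2.2.2.1 ((hQ'iff i).2 hc)
                      (fun hrr => hn2 ((hQniff i).1 hrr.2))
                      (fun hrr => ((hQ2m_iff i).1 ((hQ2miff i).1 hrr.1)).2 hm2)
                  rw [← h4, hai]
                  exact aZ_one C i hiQs (fun hmn => hn2 hmn.2) (Or.inl hm2)
              · by_cases hn2 : i ∈ Qn
                · have h4 := (ha' i).2.2.2.2.1 ((hQ'iff i).2 hc)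
                      (fun hrr => hm2 ((hQmiff i).1 hrr.1))
                      (fun hrr => ((hQ2n_iff i).1 ((hQ2niff i).1 hrr.2)).2 hn2)
                  rw [← h4, hai]
                  exact aZ_one C i hiQs (fun hmn => hm2 hmn.1) (Or.inr hn2)
                · have h3 := (ha' i).2.2.2.1 ((hQ'iff i).2 hc)
                      ((hQ2miff i).2 ((hQ2m_iff i).2 ⟨hc, hm2⟩))
                      ((hQ2niff i).2 ((hQ2n_iff i).2 ⟨hc, hn2⟩))
                  obtain ⟨hdrop, hpos⟩ := aZ_drop C i hiQs hm2 hn2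
                  rw [hdrop]
                  funext h
                  have h3h := congrFun h3 h
                  rw [hhagree, hai] at h3h
                  unfold drop
                  by_cases hh2 : h = hgtAt r (wk r l Qm Qn aL N) i
                  · rw [if_pos hh2]
                    rw [if_pos hh2] at h3h
                    subst hh2
                    omega
                  · rw [if_neg hh2]
                    rw [if_neg hh2] at h3h
                    omega
            · have hnotQs : i ∉ Qs := fun hc2 => hc (hiff.2 hc2)
              have h0' := (ha' i).1 (fun hq => hc ((hQ'iff i).1 hq))
              rw [← h0', hai]
              exact aZ_step_eq C i hnotQs
          · -- i ≤ N
            have hnotQs : i ∉ Qs := by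
              intro hc
              have := hc.1
              omega
            have hnotQ' : i ∉ Q' := by
              intro hc
              have hmnot : i ∉ Qm := fun h =>
                absurd (hNQ i (Set.mem_union_left _ h)) (by omega)
              have hnnot : i ∉ Qn := fun h =>
                absurd (hNQ i (Set.mem_union_right _ h)) (by omega)
              have h3 := (ha' i).2.2.2.1 ((hQ'iff i).2 hc)
                  ((hQ2miff i).2 ((hQ2m_iff i).2 ⟨hc, hmnot⟩))
                  ((hQ2niff i).2 ((hQ2n_iff i).2 ⟨hc, hnnot⟩))
              have h4 := congrFun h3 (hgtAt r (theWitness r l k') i)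
              rw [if_pos rfl] at h4
              have h5 := (ha' i).2.2.2.2.2.1 (fun j hj hq =>
                (fun hc2 => absurd ((hmem j hj).1 hc2).1 (by omega)) ((hQ'iff j).1 hq))
              have hh0 : hgtAt r (theWitness r l k') i
                  = ∑ j ∈ Finset.Ico 1 r, l (i - (j:ℤ)) := by
                rw [hhagree]
                unfold hgtAt
                apply Finset.sum_congr rfl
                intro j hj
                simp only [Finset.mem_Ico] at hj
                exact wk_le_N _ (by omega)
              have hli : l i = 0 := (hQ'.2 i hc).1
              have hval : aL (hgtAt r (theWitness r l k') i) = 0 := by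
                rw [hh0]
                apply hNa i (by omega)
                rw [window_split hr l i, hli]
                omega
              rw [h5, hval] at h4
              omega
            refine ⟨iff_of_false hnotQ' hnotQs, ?_⟩
            have h0' := (ha' i).1 (fun hq => hnotQ' ((hQ'iff i).1 hq))
            rw [← h0', hai]
            exact aZ_step_eq C i hnotQs
        constructor
        · intro j hj
          rw [hcast] at hj
          by_cases hji : j < i
          · exact hmem j hji
          · have hje : j = i := by omega
            subst hje
            exact hkey.1
        · rw [hcast]
          exact hkey.2
    have hQeq : Q' = Qs := by
      ext j
      obtain ⟨t, ht⟩ : ∃ t : ℕ, j < b + t := ⟨(j - b + 1).toNat, by omega⟩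
      exact (hclaim t).1 j ht
    constructor
    · rw [hk'T, hQeq]
    · have h6 := (ha' M).2.2.2.2.2.2 (fun j hj hq => by
        have hjq : j ∈ Qs := hQeq ▸ (hQ'iff j).1 hq
        exact absurd (hMQ j hjq) (by omega))
      have haM : a' M = aZ r l Qm Qn aL N M := by
        obtain ⟨t, ht⟩ : ∃ t : ℕ, M = b + t := ⟨(M - b).toNat, by omega⟩
        rw [ht]
        exact (hclaim t).2
      rw [← h6, haM]
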